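/- Let â₁, â₂ ∈ ℝ^m be linearly independent, Â := [â₁ â₂], and b̂ := α â₁ + β â₂ with α ≠ 0. Let Â_{b/1} := [b̂ â₂]. If ‖Â⁺‖₁ ≤ ‖Â_{b/1}⁺‖₁ then |α| − |β| ≤ 1. -/

import Mathlib

open Matrix

/-- Moore–Penrose pseudoinverse of a full-column-rank `m × 2` matrix. -/
noncomputable def pinv2 {m : ℕ} (B : Matrix (Fin m) (Fin 2) ℝ) : Matrix (Fin 2) (Fin m) ℝ :=
  (Bᵀ * B)⁻¹ * Bᵀ

theorem rank_two_column_exchange_bound {m : ℕ}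
    (a1 a2 : Fin m → ℝ) (hli : LinearIndependent ℝ ![a1, a2])
    (α β : ℝ) (hα : α ≠ 0)
    (b : Fin m → ℝ) (hb : b = α • a1 + β • a2)
    (Ahat Ab1 : Matrix (Fin m) (Fin 2) ℝ)
    (hAhat : Ahat = Matrix.of fun i k => ![a1, a2] k i)
    (hAb1 : Ab1 = Matrix.of fun i k => ![b, a2] k i)
    (hmin : ∑ k, ∑ j, |pinv2 Ahat k j| ≤ ∑ k, ∑ j, |pinv2 Ab1 k j|) :
    |α| - |β| ≤ 1 := by
  classical
  have hli2 := Fintype.linearIndependent_iff.mp hli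
  set G : Matrix (Fin 2) (Fin 2) ℝ := Ahatᵀ * Ahat with hG
  -- A *ᵥ x ≠ 0 for x ≠ 0
  have hmv : ∀ x : Fin 2 → ℝ, x ≠ 0 → Ahat *ᵥ x ≠ 0 := by
    intro x hx hzero
    apply hx
    funext i
    apply hli2 x
    rw [Fin.sum_univ_two]
    funext j
    have := congrFun hzero j
    simpa [hAhat, Matrix.mulVec, dotProduct, Fin.sum_univ_two, mul_comm] using this
  have hGpd : G.PosDef := by
    refine Matrix.PosDef.of_dotProduct_mulVec_pos ?_ ?_
    · simpa using Matrix.isHermitian_conjTranspose_mul_self Ahat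
    · intro x hx
      have h1 : star x ⬝ᵥ (G *ᵥ x) = (Ahat *ᵥ x) ⬝ᵥ (Ahat *ᵥ x) := by
        rw [hG, ← Matrix.mulVec_mulVec, dotProduct_mulVec, star_trivial,
          Matrix.vecMul_transpose]
      rw [h1]
      obtain ⟨i, hi⟩ : ∃ i, (Ahat *ᵥ x) i ≠ 0 := by
        by_contra h; push_neg at h; exact hmv x hx (funext h)
      have : 0 < ∑ j, (Ahat *ᵥ x) j * (Ahat *ᵥ x) j :=
        Finset.sum_pos' (fun j _ => mul_self_nonneg _)
          ⟨i, Finset.mem_univ i, mul_self_pos.mpr hi⟩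
      simpa [dotProduct] using this
  have hGu : IsUnit G.det := hGpd.det_pos.ne'.isUnit
  have hPA : pinv2 Ahat * Ahat = 1 := by
    show (Ahatᵀ * Ahat)⁻¹ * Ahatᵀ * Ahat = 1
    rw [Matrix.mul_assoc]
    exact Matrix.nonsing_inv_mul G hGu
  set C : Matrix (Fin 2) (Fin 2) ℝ := !![α, 0; β, 1] with hCdef
  have hC : Ab1 = Ahat * C := by
    rw [hAb1, hAhat]
    ext i k
    fin_cases k <;>
      simp [Matrix.mul_apply, Fin.sum_univ_two, hb, hCdef] <;> ring
  have hCu : IsUnit C.det := by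
    have : C.det = α := by simp [hCdef]
    rw [this]; exact hα.isUnit
  set D : Matrix (Fin 2) (Fin 2) ℝ := !![α⁻¹, 0; -(β*α⁻¹), 1] with hDdef
  have hCD : C * D = 1 := by
    ext i j
    fin_cases i <;> fin_cases j <;>
      simp [hCdef, hDdef, Matrix.mul_apply, Fin.sum_univ_two] <;> field_simp
  have hCinv : C⁻¹ = D := Matrix.inv_eq_right_inv hCD
  have hQ : pinv2 Ab1 = D * pinv2 Ahat := by
    rw [← hCinv, hC]
    show ((Ahat * C)ᵀ * (Ahat * C))⁻¹ * (Ahat * C)ᵀ = C⁻¹ * ((Ahatᵀ * Ahat)⁻¹ * Ahatᵀ)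
    have hCtu : IsUnit (Cᵀ).det := by rwa [Matrix.det_transpose]
    have h1 : (Ahat * C)ᵀ * (Ahat * C) = Cᵀ * (G * C) := by
      rw [Matrix.transpose_mul, hG]; simp only [Matrix.mul_assoc]
    rw [h1, Matrix.transpose_mul, Matrix.mul_inv_rev, Matrix.mul_inv_rev]
    calc C⁻¹ * G⁻¹ * (Cᵀ)⁻¹ * (Cᵀ * Ahatᵀ)
        = C⁻¹ * (G⁻¹ * (((Cᵀ)⁻¹ * Cᵀ) * Ahatᵀ)) := by simp only [Matrix.mul_assoc]
      _ = C⁻¹ * ((Ahatᵀ * Ahat)⁻¹ * Ahatᵀ) := by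
          rw [Matrix.nonsing_inv_mul _ hCtu, Matrix.one_mul, hG]
  set P := pinv2 Ahat with hP
  set r0 := ∑ j, |P 0 j| with hr0
  set r1 := ∑ j, |P 1 j| with hr1
  have hα' : (0:ℝ) < |α| := abs_pos.mpr hα
  -- r0 > 0
  have h11 : ∑ j, P 0 j * Ahat j 0 = 1 := by
    have := congrFun (congrFun hPA 0) 0
    simpa [Matrix.mul_apply] using this
  have hr0pos : 0 < r0 := by
    rcases (Finset.sum_nonneg fun j _ => abs_nonneg (P 0 j)).lt_or_eq with h | h
    · exact h
    · exfalso
      have hz := (Finset.sum_eq_zero_iff_of_nonneg fun j _ => abs_nonneg (P 0 j)).mp h.symm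
      have : ∑ j, P 0 j * Ahat j 0 = 0 := Finset.sum_eq_zero fun j _ => by
        rw [abs_eq_zero.mp (hz j (Finset.mem_univ j)), zero_mul]
      rw [this] at h11; norm_num at h11
  -- entries of pinv2 Ab1
  have hQ0 : ∀ j, pinv2 Ab1 0 j = α⁻¹ * P 0 j := by
    intro j; rw [hQ]; simp [Matrix.mul_apply, Fin.sum_univ_two, hDdef, hP]
  have hQ1 : ∀ j, pinv2 Ab1 1 j = -(β*α⁻¹) * P 0 j + P 1 j := by
    intro j; rw [hQ]; simp [Matrix.mul_apply, Fin.sum_univ_two, hDdef, hP]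
  -- sums
  have hL : ∑ k, ∑ j, |P k j| = r0 + r1 := by rw [Fin.sum_univ_two]
  have hR0 : ∑ j, |pinv2 Ab1 0 j| = |α|⁻¹ * r0 := by
    rw [hr0, Finset.mul_sum]
    exact Finset.sum_congr rfl fun j _ => by rw [hQ0 j, abs_mul, abs_inv]
  have hR1 : ∑ j, |pinv2 Ab1 1 j| ≤ |β| * |α|⁻¹ * r0 + r1 := by
    rw [hr0, hr1, Finset.mul_sum, ← Finset.sum_add_distrib]
    refine Finset.sum_le_sum fun j _ => ?_
    rw [hQ1 j]
    calc |(-(β*α⁻¹)) * P 0 j + P 1 j| ≤ |(-(β*α⁻¹)) * P 0 j| + |P 1 j| := abs_add_le _ _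
      _ = |β| * |α|⁻¹ * |P 0 j| + |P 1 j| := by rw [abs_mul, abs_neg, abs_mul, abs_inv]
  have key : r0 + r1 ≤ |α|⁻¹ * r0 + (|β| * |α|⁻¹ * r0 + r1) := by
    calc r0 + r1 = ∑ k, ∑ j, |P k j| := hL.symm
      _ ≤ ∑ k, ∑ j, |pinv2 Ab1 k j| := hmin
      _ = ∑ j, |pinv2 Ab1 0 j| + ∑ j, |pinv2 Ab1 1 j| := Fin.sum_univ_two _
      _ ≤ |α|⁻¹ * r0 + (|β| * |α|⁻¹ * r0 + r1) := by rw [hR0]; linarith [hR1]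
  have hinv : |α| * |α|⁻¹ = 1 := mul_inv_cancel₀ hα'.ne'
  have h2 := mul_le_mul_of_nonneg_left key hα'.le
  have e1 : |α| * (|α|⁻¹ * r0 + (|β| * |α|⁻¹ * r0 + r1)) = r0 + |β| * r0 + |α| * r1 := by
    field_simp; ring
  rw [e1] at h2
  nlinarith [hr0pos, mul_pos hα' hr0pos]
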